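/- arXiv:1908.06457 — 3 statements merged into one kernel-verified Lean document; each statement's English description precedes it below -/
import Mathlib

section
/- If the equation -Δv = 2t²K e^v - 2(1 - e^{-v}) on a closed hyperbolic surface of genus g ≥ 2 admits a solution v ≥ 0, then t ≤ 1 / (⨍_S 2√K dA), where ⨍ denotes the average integral. -/
open MeasureTheory Real

/-- If the Gauss equation `-Δv = 2t²K e^v - 2(1-e^{-v})` on a closed hyperbolic
surface of genus `g ≥ 2` admits a solution `v ≥ 0`, then
`t ≤ 1 / (⨍ 2√K dA)`, the average integral being taken over `S`. -/
theorem solvability_upper_bound_t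
    {S : Type*} [MeasurableSpace S] (μ : Measure S) [IsFiniteMeasure μ]
    (g : ℕ) (hg : 2 ≤ g)
    (hGB : (μ Set.univ).toReal = 4 * π * ((g : ℝ) - 1))
    (K v Δv : S → ℝ) (t : ℝ) (ht : 0 ≤ t) (hK : ∀ x, 0 ≤ K x)
    (hKpos : 0 < ∫ x, Real.sqrt (K x) ∂μ)
    (hKsqrt : Integrable (fun x => Real.sqrt (K x)) μ)
    (hv : ∀ x, 0 ≤ v x)
    (heq : ∀ x, -Δv x = 2 * t ^ 2 * K x * exp (v x) - 2 * (1 - exp (-v x)))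
    (hΔint : Integrable Δv μ) (hΔ0 : ∫ x, Δv x ∂μ = 0)
    (hKint : Integrable (fun x => K x * exp (v x)) μ)
    (hvint : Integrable (fun x => exp (-v x)) μ) :
    t ≤ 1 / (⨍ x, 2 * Real.sqrt (K x) ∂μ) := by
  have hg' : (2:ℝ) ≤ (g:ℝ) := by exact_mod_cast hg
  have hM : (0:ℝ) < (μ Set.univ).toReal := by
    rw [hGB]
    have hp := Real.pi_pos
    nlinarith
  -- pointwise AM-GM
  have hpt : ∀ x, 2 * t * Real.sqrt (K x)
      ≤ t ^ 2 * (K x * exp (v x)) + exp (-v x) := by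
    intro x
    set e1 := exp (v x / 2) with he1def
    set e2 := exp (-v x / 2) with he2def
    have he1 : e1 * e1 = exp (v x) := by
      rw [he1def, ← Real.exp_add]; congr 1; ring
    have he2 : e2 * e2 = exp (-v x) := by
      rw [he2def, ← Real.exp_add]; congr 1; ring
    have he12 : e1 * e2 = 1 := by
      have h0 : v x / 2 + -v x / 2 = 0 := by ring
      rw [he1def, he2def, ← Real.exp_add, h0, Real.exp_zero]
    have hs : Real.sqrt (K x) * Real.sqrt (K x) = K x := Real.mul_self_sqrt (hK x)
    have hsq := sq_nonneg (t * Real.sqrt (K x) * e1 - e2)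
    have hexp : (t * Real.sqrt (K x) * e1 - e2) ^ 2
        = t ^ 2 * ((Real.sqrt (K x) * Real.sqrt (K x)) * (e1 * e1))
          - 2 * t * Real.sqrt (K x) * (e1 * e2) + e2 * e2 := by ring
    rw [hexp, hs, he1, he2, he12] at hsq
    linarith
  -- integral identity
  have hf : Integrable (fun x => 2 * t ^ 2 * (K x * exp (v x))) μ := hKint.const_mul _
  have hg1 : Integrable (fun x => (1:ℝ) - exp (-v x)) μ := (integrable_const 1).sub hvint
  have hgg : Integrable (fun x => 2 * ((1:ℝ) - exp (-v x))) μ := hg1.const_mul _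
  have h0 : ∫ x, (2 * t ^ 2 * (K x * exp (v x)) - 2 * (1 - exp (-v x))) ∂μ = 0 := by
    have hfun : (fun x => 2 * t ^ 2 * (K x * exp (v x)) - 2 * (1 - exp (-v x)))
        = fun x => -Δv x := by
      funext x; rw [heq x]; ring
    rw [hfun, integral_neg, hΔ0, neg_zero]
  rw [integral_sub hf hgg, integral_const_mul, integral_const_mul,
      integral_sub (integrable_const 1) hvint, integral_const, smul_eq_mul, mul_one, measureReal_def] at h0
  -- integrate the pointwise bound
  have hi1 : Integrable (fun x => 2 * t * Real.sqrt (K x)) μ := hKsqrt.const_mul _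
  have hi2 : Integrable (fun x => t ^ 2 * (K x * exp (v x)) + exp (-v x)) μ :=
    (hKint.const_mul _).add hvint
  have hmono := integral_mono hi1 hi2 hpt
  rw [integral_const_mul, integral_add (hKint.const_mul _) hvint, integral_const_mul] at hmono
  have hineq : 2 * t * ∫ x, Real.sqrt (K x) ∂μ ≤ (μ Set.univ).toReal := by linarith
  -- conclude
  have hI : (0:ℝ) < 2 * ∫ x, Real.sqrt (K x) ∂μ := by linarith
  rw [average_eq, measureReal_def, smul_eq_mul, integral_const_mul, one_div, mul_inv, inv_inv,
      ← div_eq_mul_inv, le_div_iff₀ hI]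
  nlinarith [hineq]
end

section
/- If v is a solution of -Δv = 2t²K e^v - 2(1-e^{-v}) with v = w + c, ∫_S w dA = 0, and t ≥ δ > 0, then 0 < c ≤ log(4π(g-1)/δ²) - log(∫_S K e^w dA). -/
open MeasureTheory Real

/-- If `v = w + c` solves the Gauss equation with `∫ w = 0` and `t ≥ δ > 0`,
then `0 < c ≤ log(4π(g-1)/δ²) - log(∫ K e^w)`. -/
theorem mean_value_upper_bound
    {S : Type*} [MeasurableSpace S] (μ : Measure S) [IsFiniteMeasure μ]
    (g : ℕ) (hg : 2 ≤ g)
    (hGB : (μ Set.univ).toReal = 4 * π * ((g : ℝ) - 1))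
    (K w Δv : S → ℝ) (c t δ : ℝ) (hδ : 0 < δ) (htδ : δ ≤ t)
    (hK : ∀ x, 0 ≤ K x)
    (hKw : 0 < ∫ x, K x * exp (w x) ∂μ)
    (hw0 : ∫ x, w x ∂μ = 0)
    (hv : ∀ x, 0 < w x + c)
    (heq : ∀ x, -Δv x = 2 * t ^ 2 * K x * exp (w x + c) - 2 * (1 - exp (-(w x + c))))
    (hΔint : Integrable Δv μ) (hΔ0 : ∫ x, Δv x ∂μ = 0)
    (hwi : Integrable w μ)
    (hKint : Integrable (fun x => K x * exp (w x)) μ)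
    (hwint : Integrable (fun x => exp (-w x)) μ) :
    0 < c ∧ c ≤ Real.log (4 * π * ((g : ℝ) - 1) / δ ^ 2)
        - Real.log (∫ x, K x * exp (w x) ∂μ) := by
  set I := ∫ x, K x * exp (w x) ∂μ with hI
  set M := (μ Set.univ).toReal with hM
  have hg2 : (2:ℝ) ≤ (g:ℝ) := by exact_mod_cast hg
  have hMpos : 0 < M := by rw [hGB]; nlinarith [pi_pos]
  -- c > 0
  have hwc : 0 < ∫ x, (w x + c) ∂μ := by
    rw [integral_pos_iff_support_of_nonneg (fun x => (hv x).le)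
      (hwi.add (integrable_const c))]
    have hs : Function.support (fun x => w x + c) = Set.univ :=
      Set.eq_univ_of_forall fun x => (hv x).ne'
    rw [hs]
    exact (ENNReal.toReal_pos_iff.mp hMpos).1
  rw [integral_add hwi (integrable_const c), hw0, integral_const, zero_add, smul_eq_mul] at hwc
  have hc : 0 < c := by rw [show μ.real Set.univ = M from rfl] at hwc; nlinarith
  refine ⟨hc, ?_⟩
  -- integrate the equation
  have hint1 : Integrable (fun x => 2 * t ^ 2 * exp c * (K x * exp (w x))) μ :=
    hKint.const_mul _
  have hint2 : Integrable (fun x => 2 * exp (-c) * exp (-w x)) μ := hwint.const_mul _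
  have hEq : (fun x => 2 * t ^ 2 * exp c * (K x * exp (w x)) + 2 * exp (-c) * exp (-w x) - 2)
      = fun x => -Δv x := by
    funext x
    rw [heq x, Real.exp_add, neg_add, Real.exp_add]
    ring
  have hJ : 0 ≤ ∫ x, exp (-w x) ∂μ := integral_nonneg fun x => (exp_pos _).le
  set J := ∫ x, exp (-w x) ∂μ with hJdef
  have hsum : Integrable
      (fun x => 2 * t ^ 2 * exp c * (K x * exp (w x)) + 2 * exp (-c) * exp (-w x)) μ :=
    hint1.add hint2
  have hzero : ∫ x, (2 * t ^ 2 * exp c * (K x * exp (w x)) + 2 * exp (-c) * exp (-w x) - 2) ∂μ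
      = 0 := by
    rw [hEq, integral_neg, hΔ0, neg_zero]
  simp only [integral_sub hsum (integrable_const (2:ℝ)),
    integral_add hint1 hint2, integral_const_mul, integral_const, smul_eq_mul] at hzero
  -- key inequality
  have hδ2 : δ ^ 2 ≤ t ^ 2 := by nlinarith
  have hec : exp c ≤ M / (δ ^ 2 * I) := by
    rw [le_div_iff₀ (by positivity)]
    rw [show μ.real Set.univ = M from rfl] at hzero
    nlinarith [exp_pos c, exp_pos (-c), mul_le_mul_of_nonneg_right hδ2 (mul_pos (exp_pos c) hKw).le]
  have hlog := Real.log_le_log (exp_pos c) hec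
  rw [Real.log_exp] at hlog
  calc c ≤ Real.log (M / (δ ^ 2 * I)) := hlog
    _ = Real.log (4 * π * ((g:ℝ) - 1) / δ ^ 2) - Real.log I := by
        rw [show M = 4 * π * ((g:ℝ) - 1) from hGB, ← div_div, Real.log_div (div_pos (by nlinarith [pi_pos]) (by positivity)).ne' hKw.ne']
end

section
/- Suppose v_n = w_n + c_n are solutions of -Δv_n = 2t_n²K e^{v_n} - 2(1 - e^{-v_n}) on a closed hyperbolic surface of genus g ≥ 2, with ∫_S w_n dA = 0, c_n = ⨍_S v_n dA, and suppose ρ_n := t_n²∫_S K e^{v_n} dA → 4π(g-1). Then ∫_S e^{-v_n} dA → 0, and consequently c_n → +∞; moreover if additionally c_n ≤ C for some constant, a contradiction arises via Jensen's inequality e^{-c_n}∫_S e^{-w_n} dA ≥ |S|e^{-c_n} ≥ |S|e^{-C} > 0. -/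
open MeasureTheory Real Filter

/-- If `v_n = w_n + c_n` solve the Gauss equations with parameters `t_n` on a
closed hyperbolic surface of genus `g ≥ 2`, with `∫ w_n = 0`, and
`ρ_n := t_n²∫K e^{v_n} → 4π(g-1)`, then `∫ e^{-v_n} → 0` and `c_n → +∞`. -/
theorem blowup_mean_value_tendsto
    {S : Type*} [MeasurableSpace S] (μ : Measure S) [IsFiniteMeasure μ]
    (g : ℕ) (hg : 2 ≤ g)
    (hGB : (μ Set.univ).toReal = 4 * π * ((g : ℝ) - 1))
    (K : S → ℝ) (hK : ∀ x, 0 ≤ K x)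
    (v w : ℕ → S → ℝ) (c t : ℕ → ℝ) (Δv : ℕ → S → ℝ)
    (hsplit : ∀ n x, v n x = w n x + c n)
    (hw0 : ∀ n, ∫ x, w n x ∂μ = 0)
    (hwi : ∀ n, Integrable (w n) μ)
    (heq : ∀ n x, -Δv n x =
      2 * (t n) ^ 2 * K x * exp (v n x) - 2 * (1 - exp (-(v n x))))
    (hΔint : ∀ n, Integrable (Δv n) μ) (hΔ0 : ∀ n, ∫ x, Δv n x ∂μ = 0)
    (hKint : ∀ n, Integrable (fun x => K x * exp (v n x)) μ)
    (hvint : ∀ n, Integrable (fun x => exp (-(v n x))) μ)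
    (hρ : Tendsto (fun n => (t n) ^ 2 * ∫ x, K x * exp (v n x) ∂μ) atTop
      (nhds (4 * π * ((g : ℝ) - 1)))) :
    Tendsto (fun n => ∫ x, exp (-(v n x)) ∂μ) atTop (nhds 0) ∧
      Tendsto c atTop atTop := by
  classical
  have hApos : 0 < (μ Set.univ).toReal := by
    have h2 : (2:ℝ) ≤ (g:ℝ) := by exact_mod_cast hg
    have hπ : 0 < π := Real.pi_pos
    rw [hGB]; nlinarith
  -- conservation identity
  have key : ∀ n, ∫ x, exp (-(v n x)) ∂μ
      = (μ Set.univ).toReal - (t n) ^ 2 * ∫ x, K x * exp (v n x) ∂μ := by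
    intro n
    have iK : Integrable (fun x => 2 * (t n) ^ 2 * (K x * exp (v n x))) μ :=
      (hKint n).const_mul _
    have i2 : Integrable (fun x => 2 * (1 - exp (-(v n x)))) μ :=
      (((integrable_const (1:ℝ)).sub (hvint n)).const_mul 2)
    have h0 : ∫ x, -Δv n x ∂μ = 0 := by
      rw [integral_neg, hΔ0]; ring
    have h1 : ∫ x, -Δv n x ∂μ
        = ∫ x, (2 * (t n) ^ 2 * (K x * exp (v n x)) - 2 * (1 - exp (-(v n x)))) ∂μ := by
      apply integral_congr_ae
      filter_upwards with x
      rw [heq n x]; ring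
    rw [h0, integral_sub iK i2, integral_const_mul, integral_const_mul,
      integral_sub (integrable_const 1) (hvint n), integral_const] at h1
    simp only [smul_eq_mul, mul_one, Measure.real] at h1
    nlinarith [h1]
  have hlim : Tendsto (fun n => ∫ x, exp (-(v n x)) ∂μ) atTop (nhds 0) := by
    have h : Tendsto (fun n => (μ Set.univ).toReal
        - (t n) ^ 2 * ∫ x, K x * exp (v n x) ∂μ) atTop
        (nhds ((μ Set.univ).toReal - 4 * π * ((g : ℝ) - 1))) :=
      tendsto_const_nhds.sub hρ
    have hz : (μ Set.univ).toReal - 4 * π * ((g : ℝ) - 1) = 0 := by rw [hGB]; ring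
    rw [hz] at h
    simpa only [key] using h
  refine ⟨hlim, ?_⟩
  -- Jensen-type lower bound : exp(-c n) * |S| ≤ ∫ exp(-v n)
  have hb : ∀ n, exp (-(c n)) * (μ Set.univ).toReal ≤ ∫ x, exp (-(v n x)) ∂μ := by
    intro n
    have ilow : Integrable (fun x => exp (-(c n)) * (1 - w n x)) μ :=
      (((integrable_const (1:ℝ)).sub (hwi n)).const_mul _)
    have hmono : ∫ x, exp (-(c n)) * (1 - w n x) ∂μ ≤ ∫ x, exp (-(v n x)) ∂μ := by
      apply integral_mono ilow (hvint n)
      intro x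
      have h1 : exp (-(v n x)) = exp (-(c n)) * exp (-(w n x)) := by
        rw [hsplit n x, ← Real.exp_add]; ring_nf
      have h2 : 1 - w n x ≤ exp (-(w n x)) := by
        have := Real.add_one_le_exp (-(w n x)); linarith
      show exp (-(c n)) * (1 - w n x) ≤ exp (-(v n x))
      rw [h1]
      exact mul_le_mul_of_nonneg_left h2 (Real.exp_nonneg _)
    have hcalc : ∫ x, exp (-(c n)) * (1 - w n x) ∂μ
        = exp (-(c n)) * (μ Set.univ).toReal := by
      rw [integral_const_mul, integral_sub (integrable_const 1) (hwi n),
        integral_const, hw0]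
      simp [Measure.real]
    linarith [hcalc ▸ hmono]
  have hexp0 : Tendsto (fun n => exp (-(c n))) atTop (nhds 0) := by
    have hint0 : Tendsto (fun n => (∫ x, exp (-(v n x)) ∂μ) / (μ Set.univ).toReal)
        atTop (nhds 0) := by
      have := hlim.div_const (μ Set.univ).toReal
      simpa using this
    apply squeeze_zero (fun n => Real.exp_nonneg _) _ hint0
    intro n
    rw [le_div_iff₀ hApos]
    exact hb n
  have : Tendsto (fun n => -(c n)) atTop atBot :=
    Real.tendsto_exp_comp_nhds_zero.mp hexp0
  simpa using tendsto_neg_atBot_iff.mp this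
end
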